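/- Let Ω ⊂ ℝⁿ be a bounded domain satisfying a strong local β-shell condition for some β > 0, with Ahlfors Q-regular boundary K = ∂Ω (0 < Q < n), and suppose m(B(x,r) ∩ Ω) ≃ rⁿ for x ∈ K and 0 < r ≤ 10. For −β < α ≤ 0 define μ_α(A) = ∫_A δ_Ω(y)^α dm(y), where δ_Ω(y) = dist(y, ∂Ω). Then for all x ∈ K and 0 < r ≤ 10, μ_α(B(x,r) ∩ Ω) ≃ r^{n+α}, and hence μ_α(B(x,r) ∩ Ω) ≃ r^{n+α−Q} H^Q(B(x,r) ∩ K), with comparison constants independent of x and r. -/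

import Mathlib

open MeasureTheory Metric

lemma ray_frontier {E : Type*} [NormedAddCommGroup E] [NormedSpace ℝ E]
    {Ω : Set E} (hopen : IsOpen Ω) (hbdd : Bornology.IsBounded Ω)
    {z : E} (hz : z ∈ Ω) {e : E} (he : ‖e‖ = 1) :
    ∃ t : ℝ, 0 < t ∧ z + t • e ∈ frontier Ω := by
  obtain ⟨M, hM⟩ := hbdd.subset_closedBall 0
  have hM0 : 0 ≤ M := le_trans (norm_nonneg z) (by simpa [dist_zero_right] using hM hz)
  set T : Set ℝ := {t : ℝ | 0 ≤ t ∧ z + t • e ∉ Ω} with hT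
  have hTne : T.Nonempty := by
    refine ⟨M + ‖z‖ + 1, by positivity, fun hmem => ?_⟩
    have h1 := hM hmem
    rw [mem_closedBall, dist_zero_right] at h1
    have h2 : ‖(M + ‖z‖ + 1) • e‖ ≤ ‖z + (M + ‖z‖ + 1) • e‖ + ‖z‖ := by
      calc ‖(M + ‖z‖ + 1) • e‖ = ‖(z + (M + ‖z‖ + 1) • e) - z‖ := by rw [add_sub_cancel_left]
        _ ≤ ‖z + (M + ‖z‖ + 1) • e‖ + ‖z‖ := norm_sub_le _ _
    rw [norm_smul, he, mul_one, Real.norm_eq_abs, abs_of_nonneg (by positivity)] at h2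
    linarith
  have hTbdd : BddBelow T := ⟨0, fun t ht => ht.1⟩
  obtain ⟨ε, hε, hball⟩ := Metric.isOpen_iff.1 hopen z hz
  set u := sInf T with hu
  have huT : ∀ t ∈ T, ε ≤ t := by
    intro t ht
    by_contra hc
    push_neg at hc
    exact ht.2 (hball (by
      rw [mem_ball, dist_eq_norm, add_sub_cancel_left, norm_smul, he, mul_one,
        Real.norm_eq_abs, abs_of_nonneg ht.1]
      exact hc))
  have hupos : 0 < u := lt_of_lt_of_le hε (le_csInf hTne huT)
  refine ⟨u, hupos, ?_⟩
  rw [frontier_eq_closure_inter_closure]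
  constructor
  · refine mem_closure_of_tendsto (f := fun t : ℝ => z + t • e) (b := nhdsWithin u (Set.Iio u))
      ?_ ?_
    · exact ((continuous_const.add (continuous_id.smul continuous_const)).tendsto u).mono_left
        nhdsWithin_le_nhds
    · filter_upwards [Ioo_mem_nhdsLT_of_mem (Set.mem_Ioc.2 ⟨hupos, le_rfl⟩)] with t ht
      by_contra hc
      exact absurd (csInf_le hTbdd ⟨ht.1.le, hc⟩) (not_le.2 ht.2)
  · rw [Metric.mem_closure_iff]
    intro δ hδ
    obtain ⟨s, hsT, hs⟩ := exists_lt_of_csInf_lt hTne (show sInf T < u + δ by linarith)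
    have hus : u ≤ s := csInf_le hTbdd hsT
    refine ⟨z + s • e, hsT.2, ?_⟩
    rw [dist_eq_norm]
    have heq : z + u • e - (z + s • e) = (u - s) • e := by module
    rw [heq, norm_smul, he, mul_one, Real.norm_eq_abs, abs_of_nonpos (by linarith)]
    linarith

lemma core_upper {E : Type*} [NormedAddCommGroup E] [NormedSpace ℝ E]
    [MeasurableSpace E] [BorelSpace E] {μ : Measure E}
    (α β : ℝ) (ν : ℝ) (hα0 : α ≤ 0) (hαβ : -β < α)
    (Ω : Set E) (hopen : IsOpen Ω)
    (Cs Cm : ℝ) (hCs : 1 ≤ Cs) (hCm : 1 ≤ Cm)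
    (hKne : (frontier Ω).Nonempty)
    (x : E) (hx : x ∈ frontier Ω) (r : ℝ) (hr : 0 < r)
    (hshellU : ∀ ρ : ℝ, 0 < ρ → ρ ≤ r →
      μ {y | y ∈ ball x r ∩ Ω ∧ infDist y (frontier Ω) ≤ ρ} ≤
        ENNReal.ofReal (Cs * (ρ / r) ^ β) * μ (ball x r ∩ Ω))
    (hvolU : μ (ball x r ∩ Ω) ≤ ENNReal.ofReal (Cm * r ^ ν))
    (C : ℝ) (hC : Cs * Cm * 2 ^ (-α) * (1 - 2 ^ (-(α+β)))⁻¹ ≤ C) :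
    (∫⁻ y in ball x r ∩ Ω, ENNReal.ofReal (infDist y (frontier Ω) ^ α) ∂μ) ≤
      ENNReal.ofReal (C * r ^ (ν + α)) := by
  set K := frontier Ω with hK
  set B := ball x r ∩ Ω with hB
  set q : ℝ := 2 ^ (-(α+β)) with hq
  have hq0 : 0 < q := Real.rpow_pos_of_pos two_pos _
  have hq1 : q < 1 := Real.rpow_lt_one_of_one_lt_of_neg one_lt_two (by linarith)
  set f : E → ENNReal := fun y => ENNReal.ofReal (infDist y K ^ α) with hf
  set S : ℕ → Set E := fun k =>
    B ∩ {y | infDist y K ∈ Set.Ioc (r / 2 ^ (k+1)) (r / 2 ^ k)} with hS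
  -- positivity of infDist on Ω
  have hKcl : IsClosed K := isClosed_frontier
  have hδpos : ∀ y ∈ B, 0 < infDist y K := by
    intro y hy
    rcases (lt_or_eq_of_le (infDist_nonneg (s := K) (x := y))) with h | h
    · exact h
    · exfalso
      have : y ∈ K := (hKcl.mem_iff_infDist_zero hKne).2 h.symm
      have : y ∈ Ω ∩ frontier Ω := ⟨hy.2, this⟩
      rw [hopen.inter_frontier_eq] at this
      exact this
  have hδlt : ∀ y ∈ B, infDist y K < r := fun y hy =>
    lt_of_le_of_lt (infDist_le_dist_of_mem hx) hy.1
  have hcover : B ⊆ ⋃ k, S k := by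
    intro y hy
    have h1 : 0 < infDist y K := hδpos y hy
    have h2 : infDist y K < r := hδlt y hy
    have hex : ∃ k : ℕ, r / 2 ^ (k+1) < infDist y K := by
      obtain ⟨k, hk⟩ := pow_unbounded_of_one_lt (r / infDist y K) one_lt_two
      refine ⟨k, ?_⟩
      rw [div_lt_iff₀ (by positivity)]
      rw [div_lt_iff₀ h1] at hk
      have h2k : (2:ℝ) ^ k ≤ 2 ^ (k+1) := by
        apply pow_le_pow_right₀ one_le_two (Nat.le_succ k)
      nlinarith
    set k0 := Nat.find hex with hk0
    refine Set.mem_iUnion.2 ⟨k0, hy, Nat.find_spec hex, ?_⟩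
    rcases Nat.eq_zero_or_pos k0 with h0 | h0
    · rw [h0]; simpa using h2.le
    · have := Nat.find_min hex (m := k0 - 1) (by omega)
      push_neg at this
      have heq : k0 - 1 + 1 = k0 := by omega
      rwa [heq] at this
  have hSmeas : ∀ k, MeasurableSet (S k) :=
    fun k => ((isOpen_ball.inter hopen).measurableSet).inter
      ((continuous_infDist_pt K).measurable measurableSet_Ioc)
  have pow_pos' : ∀ k : ℕ, (0:ℝ) < r / 2 ^ k := fun k => by positivity
  -- per-piece bound
  have hstep : ∀ k : ℕ, (∫⁻ y in S k, f y ∂μ) ≤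
      ENNReal.ofReal ((Cs * Cm * 2 ^ (-α) * r ^ (ν + α)) * q ^ k) := by
    intro k
    have h1 : (∫⁻ y in S k, f y ∂μ) ≤
        ENNReal.ofReal ((r / 2 ^ (k+1)) ^ α) * μ (S k) := by
      rw [← setLIntegral_const (S k)]
      refine setLIntegral_mono' (hSmeas k) fun y hy => ?_
      exact ENNReal.ofReal_le_ofReal
        (Real.rpow_le_rpow_of_nonpos (pow_pos' (k+1)) hy.2.1.le hα0)
    have h2 : μ (S k) ≤ ENNReal.ofReal (Cs * ((r / 2 ^ k) / r) ^ β) * μ B := by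
      refine le_trans (measure_mono ?_) (hshellU (r / 2 ^ k) (pow_pos' k)
        (div_le_self hr.le (one_le_pow₀ one_le_two)))
      · intro y hy; exact ⟨hy.1, hy.2.2⟩
    have key : (r / 2 ^ (k+1)) ^ α * (Cs * ((r / 2 ^ k) / r) ^ β * (Cm * r ^ ν)) =
        (Cs * Cm * 2 ^ (-α) * r ^ (ν + α)) * q ^ k := by
      have h2k1 : ((2:ℝ) ^ (k+1)) = (2:ℝ) ^ (((k:ℝ))+1) := by
        rw [← Real.rpow_natCast 2 (k+1)]; push_cast; ring_nf
      have hrr : (r / 2 ^ k) / r = (2:ℝ) ^ (-(k:ℝ)) := by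
        rw [Real.rpow_neg (by norm_num), Real.rpow_natCast]; field_simp
      rw [hrr, h2k1, Real.div_rpow hr.le (by positivity), ← Real.rpow_natCast q k, hq,
        ← Real.rpow_mul (by norm_num), ← Real.rpow_mul (by norm_num), Real.rpow_add hr]
      calc r ^ α / 2 ^ (((k:ℝ)+1) * α) * (Cs * 2 ^ (-(k:ℝ) * β) * (Cm * r ^ ν))
          = Cs * Cm * (r ^ α * r ^ ν) * (2 ^ (-(((k:ℝ)+1) * α)) * 2 ^ (-(k:ℝ) * β)) := by
            rw [div_eq_mul_inv, ← Real.rpow_neg (by norm_num : (0:ℝ) ≤ 2)]; ring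
        _ = Cs * Cm * (r ^ α * r ^ ν) * 2 ^ (-(((k:ℝ)+1) * α) + -(k:ℝ) * β) := by
            rw [← Real.rpow_add two_pos]
        _ = Cs * Cm * (r ^ α * r ^ ν) * 2 ^ (-α + -(α + β) * (k:ℝ)) := by
            congr 1; ring_nf
        _ = _ := by
            rw [Real.rpow_add two_pos,
              Real.rpow_mul (show (0:ℝ) ≤ 2 by norm_num) (-(α+β)) (k:ℝ)]
            ring
    calc (∫⁻ y in S k, f y ∂μ) ≤ ENNReal.ofReal ((r / 2 ^ (k+1)) ^ α) * μ (S k) := h1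
      _ ≤ ENNReal.ofReal ((r / 2 ^ (k+1)) ^ α) *
          (ENNReal.ofReal (Cs * ((r / 2 ^ k) / r) ^ β) * ENNReal.ofReal (Cm * r ^ ν)) := by
          gcongr
          exact h2.trans (by gcongr)
      _ = ENNReal.ofReal ((r / 2 ^ (k+1)) ^ α * (Cs * ((r / 2 ^ k) / r) ^ β * (Cm * r ^ ν))) := by
          rw [← ENNReal.ofReal_mul (by positivity), ← ENNReal.ofReal_mul (by positivity)]
      _ = _ := by rw [key]
  -- summation
  set c0 : ℝ := Cs * Cm * 2 ^ (-α) * r ^ (ν + α) with hc0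
  have hc0pos : 0 < c0 := by
    have := Real.rpow_pos_of_pos two_pos (-α)
    have := Real.rpow_pos_of_pos hr (ν + α)
    positivity
  calc (∫⁻ y in B, f y ∂μ) ≤ ∫⁻ y in ⋃ k, S k, f y ∂μ := lintegral_mono_set hcover
    _ ≤ ∑' k, ∫⁻ y in S k, f y ∂μ := lintegral_iUnion_le _ _
    _ ≤ ∑' k : ℕ, ENNReal.ofReal (c0 * q ^ k) := ENNReal.tsum_le_tsum hstep
    _ = ENNReal.ofReal c0 * ∑' k : ℕ, (ENNReal.ofReal q) ^ k := by
        rw [← ENNReal.tsum_mul_left]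
        congr 1 with k
        rw [ENNReal.ofReal_mul hc0pos.le, ENNReal.ofReal_pow hq0.le]
    _ = ENNReal.ofReal c0 * (1 - ENNReal.ofReal q)⁻¹ := by rw [ENNReal.tsum_geometric]
    _ = ENNReal.ofReal c0 * ENNReal.ofReal (1 - q)⁻¹ := by
        rw [← ENNReal.ofReal_one, ← ENNReal.ofReal_sub _ hq0.le,
          ENNReal.ofReal_inv_of_pos (by linarith)]
    _ = ENNReal.ofReal (c0 * (1 - q)⁻¹) := by
        rw [← ENNReal.ofReal_mul hc0pos.le]
    _ ≤ _ := by
        refine ENNReal.ofReal_le_ofReal ?_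
        have hrv : (0:ℝ) ≤ r ^ (ν + α) := Real.rpow_nonneg hr.le _
        rw [hc0]
        nlinarith [mul_le_mul_of_nonneg_right hC hrv]


set_option maxHeartbeats 2000000 in
/-- Codimension lemma (Lemma 4.3): for a bounded domain `Ω ⊂ ℝⁿ` satisfying a strong
local `β`-shell condition, with Ahlfors `Q`-regular boundary `K = ∂Ω` and
`m(B(x,r) ∩ Ω) ≃ rⁿ` for `x ∈ K`, the weighted measure `μ_α(A) = ∫_A δ_Ω^α dm`
satisfies `μ_α(B(x,r) ∩ Ω) ≃ r^{n+α} ≃ r^{n+α-Q} H^Q(B(x,r) ∩ K)`. -/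
theorem stmt9 (n : ℕ) (Q α β : ℝ) (hQ0 : 0 < Q) (hQn : Q < n) (hβ : 0 < β)
    (hα0 : α ≤ 0) (hαβ : -β < α)
    (Ω : Set (EuclideanSpace ℝ (Fin n))) (hopen : IsOpen Ω) (hconn : IsConnected Ω)
    (hbdd : Bornology.IsBounded Ω)
    (Cs CA Cm : ℝ) (hCs : 1 ≤ Cs) (hCA : 1 ≤ CA) (hCm : 1 ≤ Cm)
    -- strong local β-shell condition, upper bound for all x ∈ closure Ω:
    (hshellU : ∀ x ∈ closure Ω, ∀ ρ r : ℝ, 0 < ρ → ρ ≤ r → r ≤ diam Ω →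
      volume {y | y ∈ ball x r ∩ Ω ∧ infDist y (frontier Ω) ≤ ρ} ≤
        ENNReal.ofReal (Cs * (ρ / r) ^ β) * volume (ball x r ∩ Ω))
    -- strong local β-shell condition, lower bound for x ∈ ∂Ω:
    (hshellL : ∀ x ∈ frontier Ω, ∀ ρ r : ℝ, 0 < ρ → ρ ≤ r → r ≤ diam Ω →
      ENNReal.ofReal (Cs⁻¹ * (ρ / r) ^ β) * volume (ball x r ∩ Ω) ≤
        volume {y | y ∈ ball x r ∩ Ω ∧ infDist y (frontier Ω) ≤ ρ})
    -- Ahlfors Q-regularity of K = ∂Ω: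
    (hAhlfors : ∀ x ∈ frontier Ω, ∀ r : ℝ, 0 < r → r ≤ diam (frontier Ω) →
      ENNReal.ofReal (CA⁻¹ * r ^ Q) ≤ μH[Q] (ball x r ∩ frontier Ω) ∧
      μH[Q] (ball x r ∩ frontier Ω) ≤ ENNReal.ofReal (CA * r ^ Q))
    -- volume of balls centered at the boundary:
    (hvol : ∀ x ∈ frontier Ω, ∀ r : ℝ, 0 < r → r ≤ 10 →
      ENNReal.ofReal (Cm⁻¹ * r ^ (n : ℝ)) ≤ volume (ball x r ∩ Ω) ∧
      volume (ball x r ∩ Ω) ≤ ENNReal.ofReal (Cm * r ^ (n : ℝ))) :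
    ∃ c C : ℝ, 0 < c ∧ 0 < C ∧ ∀ x ∈ frontier Ω, ∀ r : ℝ, 0 < r → r ≤ 10 →
      (ENNReal.ofReal (c * r ^ ((n : ℝ) + α)) ≤
          (∫⁻ y in ball x r ∩ Ω, ENNReal.ofReal (infDist y (frontier Ω) ^ α)) ∧
        (∫⁻ y in ball x r ∩ Ω, ENNReal.ofReal (infDist y (frontier Ω) ^ α)) ≤
          ENNReal.ofReal (C * r ^ ((n : ℝ) + α))) ∧
      (ENNReal.ofReal (c * r ^ ((n : ℝ) + α - Q)) * μH[Q] (ball x r ∩ frontier Ω) ≤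
          (∫⁻ y in ball x r ∩ Ω, ENNReal.ofReal (infDist y (frontier Ω) ^ α)) ∧
        (∫⁻ y in ball x r ∩ Ω, ENNReal.ofReal (infDist y (frontier Ω) ^ α)) ≤
          ENNReal.ofReal (C * r ^ ((n : ℝ) + α - Q)) * μH[Q] (ball x r ∩ frontier Ω)) := by
  have hn : 0 < n := by exact_mod_cast hQ0.trans hQn
  haveI : Nonempty (Fin n) := ⟨⟨0, hn⟩⟩
  haveI : Nontrivial (EuclideanSpace ℝ (Fin n)) := inferInstance
  obtain ⟨z, hz⟩ := hconn.nonempty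
  obtain ⟨e, he⟩ := exists_norm_eq (EuclideanSpace ℝ (Fin n)) zero_le_one
  have hCA0 : (0:ℝ) < CA := by linarith
  have hCm0 : (0:ℝ) < Cm := by linarith
  have hCs0 : (0:ℝ) < Cs := by linarith
  obtain ⟨t1, ht1, hp⟩ := ray_frontier hopen hbdd hz he
  obtain ⟨t2, ht2, hp'⟩ := ray_frontier hopen hbdd hz (by rw [norm_neg]; exact he)
  have he0 : e ≠ 0 := by intro h; rw [h, norm_zero] at he; norm_num at he
  have hpq : z + t1 • e ≠ z + t2 • (-e) := by
    intro h
    have h3 := add_left_cancel h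
    have h4 : (t1 + t2) • e = 0 := by rw [add_smul, h3, smul_neg, neg_add_cancel]
    rcases smul_eq_zero.1 h4 with h1 | h2
    · linarith
    · exact he0 h2
  have hKbdd : Bornology.IsBounded (frontier Ω) := hbdd.closure.subset frontier_subset_closure
  have hdK : 0 < diam (frontier Ω) :=
    lt_of_lt_of_le (dist_pos.2 hpq) (dist_le_diam_of_mem hKbdd hp hp')
  have hdΩK : diam (frontier Ω) ≤ diam Ω := by
    have := diam_mono (frontier_subset_closure (s := Ω)) hbdd.closure
    rwa [diam_closure] at this
  have hd : 0 < diam Ω := lt_of_lt_of_le hdK hdΩK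
  have hKne : (frontier Ω).Nonempty := ⟨_, hp⟩
  -- Hausdorff measure two-sided bounds for all scales up to 10
  obtain ⟨cH, CH, hcH, hCH, hHbd⟩ : ∃ cH CH : ℝ, 0 < cH ∧ 0 < CH ∧
      ∀ x ∈ frontier Ω, ∀ r : ℝ, 0 < r → r ≤ 10 →
        ENNReal.ofReal (cH * r ^ Q) ≤ μH[Q] (ball x r ∩ frontier Ω) ∧
        μH[Q] (ball x r ∩ frontier Ω) ≤ ENNReal.ofReal (CH * r ^ Q) := by
    set dK := diam (frontier Ω) with hdKdef
    set H := μH[Q] (frontier Ω) with hHdef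
    have hdKQ : (0:ℝ) < dK ^ Q := Real.rpow_pos_of_pos hdK Q
    have hHlow : ENNReal.ofReal (CA⁻¹ * dK ^ Q) ≤ H :=
      le_trans (hAhlfors _ hp dK hdK le_rfl).1 (measure_mono Set.inter_subset_right)
    have hHfin : H ≠ ⊤ := by
      have hKcomp : IsCompact (frontier Ω) :=
        isCompact_of_isClosed_isBounded isClosed_frontier hKbdd
      obtain ⟨t, htK, htcov⟩ := hKcomp.elim_nhds_subcover (fun y => ball y dK)
        (fun y _ => ball_mem_nhds y hdK)
      have hle : H ≤ ∑ y ∈ t, μH[Q] (ball y dK ∩ frontier Ω) := by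
        refine le_trans (measure_mono ?_) (measure_biUnion_finset_le t _)
        intro y hy
        obtain ⟨u, hu, hyu⟩ := Set.mem_iUnion₂.1 (htcov hy)
        exact Set.mem_iUnion₂.2 ⟨u, hu, hyu, hy⟩
      have hle2 : H ≤ (t.card : ENNReal) * ENNReal.ofReal (CA * dK ^ Q) := by
        refine le_trans hle (le_trans (Finset.sum_le_sum
          (fun y hy => (hAhlfors y (htK y hy) dK hdK le_rfl).2)) ?_)
        rw [Finset.sum_const, nsmul_eq_mul]
      exact ne_top_of_le_ne_top (ENNReal.mul_ne_top (ENNReal.natCast_ne_top _)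
        ENNReal.ofReal_ne_top) hle2
    have hCHpos : (0:ℝ) < CA + H.toReal / dK ^ Q := by positivity
    refine ⟨min CA⁻¹ (CA⁻¹ * dK ^ Q / 10 ^ Q), CA + H.toReal / dK ^ Q, by positivity,
      hCHpos, ?_⟩
    intro x hx r hr hr10
    have hrpQ : (0:ℝ) ≤ r ^ Q := Real.rpow_nonneg hr.le _
    have hHt0 : (0:ℝ) ≤ H.toReal := ENNReal.toReal_nonneg
    by_cases hrK : r ≤ dK
    · obtain ⟨hlo, hhi⟩ := hAhlfors x hx r hr hrK
      constructor
      · refine le_trans (ENNReal.ofReal_le_ofReal ?_) hlo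
        nlinarith [min_le_left CA⁻¹ (CA⁻¹ * dK ^ Q / 10 ^ Q)]
      · refine le_trans hhi (ENNReal.ofReal_le_ofReal ?_)
        nlinarith [div_nonneg hHt0 hdKQ.le]
    · push_neg at hrK
      have hbK : ball x r ∩ frontier Ω = frontier Ω := Set.inter_eq_right.2
        (fun y hy => mem_ball.2 (lt_of_le_of_lt (dist_le_diam_of_mem hKbdd hy hx) hrK))
      rw [hbK]
      constructor
      · refine le_trans (ENNReal.ofReal_le_ofReal ?_) hHlow
        have h10 : r ^ Q ≤ 10 ^ Q := Real.rpow_le_rpow hr.le hr10 hQ0.le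
        have hm := min_le_right CA⁻¹ (CA⁻¹ * dK ^ Q / 10 ^ Q)
        have h10p : (0:ℝ) < 10 ^ Q := Real.rpow_pos_of_pos (by norm_num) Q
        have hmn : (0:ℝ) ≤ min CA⁻¹ (CA⁻¹ * dK ^ Q / 10 ^ Q) := by positivity
        calc min CA⁻¹ (CA⁻¹ * dK ^ Q / 10 ^ Q) * r ^ Q
            ≤ (CA⁻¹ * dK ^ Q / 10 ^ Q) * 10 ^ Q := mul_le_mul hm h10 hrpQ (hmn.trans hm)
          _ = CA⁻¹ * dK ^ Q := by field_simp
      · refine le_trans (ENNReal.ofReal_toReal hHfin).symm.le (ENNReal.ofReal_le_ofReal ?_)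
        have h1 : dK ^ Q ≤ r ^ Q := Real.rpow_le_rpow hdK.le hrK.le hQ0.le
        have h2 : H.toReal / dK ^ Q * dK ^ Q = H.toReal := div_mul_cancel₀ _ hdKQ.ne'
        nlinarith [div_nonneg hHt0 hdKQ.le]
  -- weighted measure two-sided bounds
  obtain ⟨c1, C1, hc1, hC1, hIb⟩ : ∃ c1 C1 : ℝ, 0 < c1 ∧ 0 < C1 ∧
      ∀ x ∈ frontier Ω, ∀ r : ℝ, 0 < r → r ≤ 10 →
        ENNReal.ofReal (c1 * r ^ ((n:ℝ) + α)) ≤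
          (∫⁻ y in ball x r ∩ Ω, ENNReal.ofReal (infDist y (frontier Ω) ^ α)) ∧
        (∫⁻ y in ball x r ∩ Ω, ENNReal.ofReal (infDist y (frontier Ω) ^ α)) ≤
          ENNReal.ofReal (C1 * r ^ ((n:ℝ) + α)) := by
    set q : ℝ := 2 ^ (-(α+β)) with hqdef
    have hq1 : q < 1 := Real.rpow_lt_one_of_one_lt_of_neg one_lt_two (by linarith)
    have hq0 : 0 < q := Real.rpow_pos_of_pos two_pos _
    have h1q : (0:ℝ) < 1 - q := by linarith
    have h2a : (0:ℝ) < 2 ^ (-α) := Real.rpow_pos_of_pos two_pos _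
    set C' : ℝ := Cs * Cm * 2 ^ (-α) * (1 - q)⁻¹ with hC'def
    have hC'pos : 0 < C' := by positivity
    set Kc : ℝ := max 1 ((diam Ω / 10) ^ ((n:ℝ)+α)) with hKcdef
    have hKc1 : 1 ≤ Kc := le_max_left _ _
    refine ⟨Cm⁻¹, C' * Kc, by positivity, by positivity, ?_⟩
    intro x hx r hr hr10
    have hxcl : x ∈ closure Ω := frontier_subset_closure hx
    constructor
    · -- lower bound
      have hptwise : ∀ y ∈ ball x r ∩ Ω,
          ENNReal.ofReal (r ^ α) ≤ ENNReal.ofReal (infDist y (frontier Ω) ^ α) := by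
        intro y hy
        have hy1 : infDist y (frontier Ω) ≤ r :=
          le_of_lt (lt_of_le_of_lt (infDist_le_dist_of_mem hx) (mem_ball.1 hy.1))
        have hy0 : 0 < infDist y (frontier Ω) := by
          rcases lt_or_eq_of_le (infDist_nonneg (s := frontier Ω) (x := y)) with h | h
          · exact h
          · exfalso
            have hyK : y ∈ frontier Ω :=
              (isClosed_frontier.mem_iff_infDist_zero hKne).2 h.symm
            have : y ∈ Ω ∩ frontier Ω := ⟨hy.2, hyK⟩
            rw [hopen.inter_frontier_eq] at this
            exact this
        exact ENNReal.ofReal_le_ofReal (Real.rpow_le_rpow_of_nonpos hy0 hy1 hα0)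
      calc ENNReal.ofReal (Cm⁻¹ * r ^ ((n:ℝ)+α))
          = ENNReal.ofReal (r ^ α) * ENNReal.ofReal (Cm⁻¹ * r ^ (n:ℝ)) := by
            rw [← ENNReal.ofReal_mul (Real.rpow_nonneg hr.le _)]
            congr 1
            rw [Real.rpow_add hr]; ring
        _ ≤ ENNReal.ofReal (r ^ α) * volume (ball x r ∩ Ω) :=
            mul_le_mul' le_rfl (hvol x hx r hr hr10).1
        _ = ∫⁻ _ in ball x r ∩ Ω, ENNReal.ofReal (r ^ α) := (setLIntegral_const _ _).symm
        _ ≤ _ := setLIntegral_mono' (isOpen_ball.inter hopen).measurableSet hptwise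
    · -- upper bound
      by_cases hrd : r ≤ diam Ω
      · refine core_upper α β (n:ℝ) hα0 hαβ Ω hopen Cs Cm hCs hCm hKne x hx r hr
          (fun ρ hρ hρr => hshellU x hxcl ρ r hρ hρr hrd) (hvol x hx r hr hr10).2
          (C' * Kc) ?_
        rw [hC'def, hqdef]
        exact le_mul_of_one_le_right (by positivity) hKc1
      · push_neg at hrd
        have hd10 : diam Ω ≤ 10 := le_trans hrd.le hr10
        have hsub : ball x r ∩ Ω ⊆ (ball x (diam Ω) ∩ Ω) ∪ sphere x (diam Ω) := by
          intro y hy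
          have hdy : dist y x ≤ diam Ω := by
            have := dist_le_diam_of_mem hbdd.closure (subset_closure hy.2) hxcl
            rwa [diam_closure] at this
          rcases lt_or_eq_of_le hdy with h | h
          · exact Or.inl ⟨mem_ball.2 h, hy.2⟩
          · exact Or.inr (mem_sphere.2 h)
        have hKcb : diam Ω ^ ((n:ℝ)+α) ≤ Kc * r ^ ((n:ℝ)+α) := by
          rcases le_or_gt 0 ((n:ℝ)+α) with hepos | heneg
          · have hA : diam Ω ^ ((n:ℝ)+α) ≤ r ^ ((n:ℝ)+α) :=
              Real.rpow_le_rpow hd.le hrd.le hepos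
            have hB : (0:ℝ) ≤ r ^ ((n:ℝ)+α) := Real.rpow_nonneg hr.le _
            exact hA.trans (le_mul_of_one_le_left hB hKc1)
          · have heq : diam Ω ^ ((n:ℝ)+α) = (diam Ω / 10) ^ ((n:ℝ)+α) * 10 ^ ((n:ℝ)+α) := by
              rw [Real.div_rpow hd.le (by norm_num)]
              have h10p : (0:ℝ) < 10 ^ ((n:ℝ)+α) := Real.rpow_pos_of_pos (by norm_num) _
              field_simp
            have hA : (10:ℝ) ^ ((n:ℝ)+α) ≤ r ^ ((n:ℝ)+α) :=
              Real.rpow_le_rpow_of_nonpos hr hr10 heneg.le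
            have hB : (0:ℝ) ≤ (diam Ω / 10) ^ ((n:ℝ)+α) :=
              Real.rpow_nonneg (by positivity) _
            calc diam Ω ^ ((n:ℝ)+α)
                = (diam Ω / 10) ^ ((n:ℝ)+α) * 10 ^ ((n:ℝ)+α) := heq
              _ ≤ (diam Ω / 10) ^ ((n:ℝ)+α) * r ^ ((n:ℝ)+α) :=
                  mul_le_mul_of_nonneg_left hA hB
              _ ≤ Kc * r ^ ((n:ℝ)+α) :=
                  mul_le_mul_of_nonneg_right (le_max_right _ _) (Real.rpow_nonneg hr.le _)
        calc (∫⁻ y in ball x r ∩ Ω, ENNReal.ofReal (infDist y (frontier Ω) ^ α))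
            ≤ ∫⁻ y in (ball x (diam Ω) ∩ Ω) ∪ sphere x (diam Ω),
                ENNReal.ofReal (infDist y (frontier Ω) ^ α) := lintegral_mono_set hsub
          _ ≤ (∫⁻ y in ball x (diam Ω) ∩ Ω, ENNReal.ofReal (infDist y (frontier Ω) ^ α)) +
              ∫⁻ y in sphere x (diam Ω), ENNReal.ofReal (infDist y (frontier Ω) ^ α) :=
              lintegral_union_le _ _ _
          _ = ∫⁻ y in ball x (diam Ω) ∩ Ω, ENNReal.ofReal (infDist y (frontier Ω) ^ α) := by
              rw [setLIntegral_measure_zero _ _ (Measure.addHaar_sphere volume x (diam Ω)),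
                add_zero]
          _ ≤ ENNReal.ofReal (C' * (diam Ω) ^ ((n:ℝ)+α)) :=
              core_upper α β (n:ℝ) hα0 hαβ Ω hopen Cs Cm hCs hCm hKne x hx (diam Ω) hd
                (fun ρ hρ hρr => hshellU x hxcl ρ (diam Ω) hρ hρr le_rfl)
                (hvol x hx (diam Ω) hd hd10).2 C' (le_of_eq (by rw [hC'def, hqdef]))
          _ ≤ ENNReal.ofReal (C' * Kc * r ^ ((n:ℝ)+α)) := by
              refine ENNReal.ofReal_le_ofReal ?_
              calc C' * diam Ω ^ ((n:ℝ)+α) ≤ C' * (Kc * r ^ ((n:ℝ)+α)) :=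
                    mul_le_mul_of_nonneg_left hKcb hC'pos.le
                _ = C' * Kc * r ^ ((n:ℝ)+α) := by ring
  -- final assembly
  have hcpos : (0:ℝ) < min c1 (c1 / CH) := by positivity
  refine ⟨min c1 (c1 / CH), max C1 (C1 / cH), hcpos,
    lt_of_lt_of_le hC1 (le_max_left _ _), ?_⟩
  intro x hx r hr hr10
  obtain ⟨hI1, hI2⟩ := hIb x hx r hr hr10
  obtain ⟨hH1, hH2⟩ := hHbd x hx r hr hr10
  have hre : (0:ℝ) < r ^ ((n:ℝ)+α) := Real.rpow_pos_of_pos hr _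
  have hre' : (0:ℝ) ≤ r ^ ((n:ℝ)+α-Q) := Real.rpow_nonneg hr.le _
  refine ⟨⟨le_trans (ENNReal.ofReal_le_ofReal
      (by nlinarith [min_le_left c1 (c1/CH)])) hI1,
    le_trans hI2 (ENNReal.ofReal_le_ofReal
      (by nlinarith [le_max_left C1 (C1/cH)]))⟩, ?_, ?_⟩
  · calc ENNReal.ofReal (min c1 (c1/CH) * r ^ ((n:ℝ)+α-Q)) * μH[Q] (ball x r ∩ frontier Ω)
        ≤ ENNReal.ofReal ((c1/CH) * r ^ ((n:ℝ)+α-Q)) * ENNReal.ofReal (CH * r ^ Q) :=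
          mul_le_mul' (ENNReal.ofReal_le_ofReal
            (by nlinarith [min_le_right c1 (c1/CH)])) hH2
      _ = ENNReal.ofReal ((c1/CH) * r ^ ((n:ℝ)+α-Q) * (CH * r ^ Q)) := by
          rw [← ENNReal.ofReal_mul (by positivity)]
      _ = ENNReal.ofReal (c1 * r ^ ((n:ℝ)+α)) := by
          congr 1
          rw [show (n:ℝ)+α = ((n:ℝ)+α-Q)+Q by ring, Real.rpow_add hr]
          field_simp
          ring
      _ ≤ _ := hI1
  · calc (∫⁻ y in ball x r ∩ Ω, ENNReal.ofReal (infDist y (frontier Ω) ^ α))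
        ≤ ENNReal.ofReal (C1 * r ^ ((n:ℝ)+α)) := hI2
      _ = ENNReal.ofReal ((C1/cH) * r ^ ((n:ℝ)+α-Q) * (cH * r ^ Q)) := by
          congr 1
          rw [show (n:ℝ)+α = ((n:ℝ)+α-Q)+Q by ring, Real.rpow_add hr]
          field_simp
          ring
      _ = ENNReal.ofReal ((C1/cH) * r ^ ((n:ℝ)+α-Q)) * ENNReal.ofReal (cH * r ^ Q) := by
          rw [← ENNReal.ofReal_mul (by positivity)]
      _ ≤ ENNReal.ofReal (max C1 (C1/cH) * r ^ ((n:ℝ)+α-Q)) * μH[Q] (ball x r ∩ frontier Ω) :=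
          mul_le_mul' (ENNReal.ofReal_le_ofReal
            (by nlinarith [le_max_right C1 (C1/cH)])) hH1
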